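/- Attacker's share of expected equilibrium earnings in the Attacker-Defender game with equal endowments R converges to e/(e+1) as R goes to infinity: lim_{R→∞} Π_A/(Π_A + Π_D) = lim_{R→∞} R/(2R − l*(R)) = e/(e+1). -/

import Mathlib

/-- Attacker's payoff: `R_A - i + R_D - j` if `i > j`, else `R_A - i`. -/
noncomputable def piA (RA RD i j : ℕ) : ℝ :=
  if j < i then (RA : ℝ) - i + ((RD : ℝ) - j) else (RA : ℝ) - i

/-- Defender's payoff: `0` if `i > j`, else `R_D - j`. -/
noncomputable def piD (RD i j : ℕ) : ℝ :=
  if j < i then 0 else (RD : ℝ) - j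

/-- A mixed strategy over the investments `{0, 1, ..., R}`. -/
def IsMixed (R : ℕ) (s : ℕ → ℝ) : Prop :=
  (∀ i, 0 ≤ s i) ∧ (∀ i, R < i → s i = 0) ∧ ∑ i ∈ Finset.range (R + 1), s i = 1

/-- Attacker's expected payoff under mixed strategies. -/
noncomputable def PayA (RA RD : ℕ) (a d : ℕ → ℝ) : ℝ :=
  ∑ i ∈ Finset.range (RA + 1), ∑ j ∈ Finset.range (RD + 1), a i * d j * piA RA RD i j

/-- Defender's expected payoff under mixed strategies. -/
noncomputable def PayD (RA RD : ℕ) (a d : ℕ → ℝ) : ℝ :=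
  ∑ i ∈ Finset.range (RA + 1), ∑ j ∈ Finset.range (RD + 1), a i * d j * piD RD i j

/-- Mixed-strategy Nash equilibrium of the A-D game with endowments `RA`, `RD`. -/
def IsNash (RA RD : ℕ) (a d : ℕ → ℝ) : Prop :=
  IsMixed RA a ∧ IsMixed RD d ∧
  (∀ a', IsMixed RA a' → PayA RA RD a' d ≤ PayA RA RD a d) ∧
  (∀ d', IsMixed RD d' → PayD RA RD a d' ≤ PayD RA RD a d)

/-- The `n`-th harmonic number `H_n = 1 + 1/2 + ... + 1/n` (with `H_0 = 0`). -/
noncomputable def H (n : ℕ) : ℝ := ∑ k ∈ Finset.Icc 1 n, (1 : ℝ) / k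

/-- `l` is the upper bound `l*` for endowment `R`:
the unique `1 ≤ l ≤ R - 1` with `H_R - H_{R-l} < 1 < H_R - H_{R-l-1}`. -/
def IsUpperBound (R l : ℕ) : Prop :=
  1 ≤ l ∧ l ≤ R - 1 ∧ H R - H (R - l) < 1 ∧ 1 < H R - H (R - l - 1)

/-- Attacker's equilibrium mixed strategy (defender endowment `R`, upper bound `l`). -/
noncomputable def astar (R l : ℕ) : ℕ → ℝ := fun i =>
  if i = 0 then ((R : ℝ) - l) / R
  else if i ≤ l then ((R : ℝ) - l) / (((R : ℝ) - i + 1) * ((R : ℝ) - i))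
  else 0

/-- Defender's equilibrium mixed strategy (defender endowment `R`, upper bound `l`). -/
noncomputable def dstar (R l : ℕ) : ℕ → ℝ := fun j =>
  if j < l then 1 / ((R : ℝ) - j)
  else if j = l then 1 - ∑ k ∈ Finset.range l, 1 / ((R : ℝ) - k)
  else 0


open Finset

noncomputable def Ssum (R l : ℕ) : ℝ := ∑ k ∈ Finset.range l, 1 / ((R : ℝ) - k)

section Pay

variable {R l : ℕ}

lemma cast_sub_pos {k : ℕ} (h : k < R) : (0:ℝ) < (R:ℝ) - k := by
  have : (k:ℝ) < (R:ℝ) := by exact_mod_cast h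
  linarith

lemma dstar_sum (hlR : l + 1 ≤ R) :
    ∑ j ∈ Finset.range (R + 1), dstar R l j = 1 := by
  have hsub : Finset.range (l+1) ⊆ Finset.range (R+1) := by
    apply Finset.range_subset_range.mpr; omega
  rw [← Finset.sum_subset hsub]
  · rw [Finset.sum_range_succ]
    have h1 : ∀ j ∈ Finset.range l, dstar R l j = 1 / ((R:ℝ) - j) := by
      intro j hj; simp only [dstar, if_pos (Finset.mem_range.mp hj)]
    rw [Finset.sum_congr rfl h1]
    have h2 : dstar R l l = 1 - ∑ x ∈ Finset.range l, 1/((R:ℝ)-x) := by simp [dstar]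
    rw [h2]; ring
  · intro x hx hx'
    have : l < x := by
      simp only [Finset.mem_range] at hx hx'; omega
    simp only [dstar]
    rw [if_neg (by omega), if_neg (by omega)]

lemma astar_succ_eq (hlR : l + 1 ≤ R) {i : ℕ} (hi : i < l) :
    astar R l (i+1) = ((R:ℝ) - l) / ((R:ℝ) - (i+1)) - ((R:ℝ) - l) / ((R:ℝ) - i) := by
  have h1 : (0:ℝ) < (R:ℝ) - i := cast_sub_pos (by omega)
  have h2 : (0:ℝ) < (R:ℝ) - (i+1:ℕ) := cast_sub_pos (by omega)
  simp only [astar]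
  rw [if_neg (by omega), if_pos (by omega)]
  push_cast at h2 ⊢
  field_simp
  ring

lemma astar_sum (hlR : l + 1 ≤ R) :
    ∑ i ∈ Finset.range (l + 1), astar R l i = 1 := by
  rw [Finset.sum_range_succ']
  have h1 : ∀ i ∈ Finset.range l, astar R l (i+1)
      = (fun k : ℕ => ((R:ℝ) - l) / ((R:ℝ) - k)) (i+1)
        - (fun k : ℕ => ((R:ℝ) - l) / ((R:ℝ) - k)) i := by
    intro i hi
    rw [astar_succ_eq hlR (Finset.mem_range.mp hi)]
    push_cast
    ring
  rw [Finset.sum_congr rfl h1, Finset.sum_range_sub (fun i => ((R:ℝ) - l) / ((R:ℝ) - i))]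
  have hR : (0:ℝ) < (R:ℝ) := by
    have : (0:ℕ) < R := by omega
    exact_mod_cast this
  have hRl : (0:ℝ) < (R:ℝ) - l := cast_sub_pos (by omega)
  have h0 : astar R l 0 = ((R:ℝ) - l) / R := by simp [astar]
  rw [h0]
  field_simp
  rw [Nat.cast_zero, sub_zero, mul_sub, mul_one, mul_div_assoc', mul_div_cancel_left₀ _ hR.ne']
  ring

lemma astar_moment (hlR : l + 1 ≤ R) :
    ∑ i ∈ Finset.range (l + 1), astar R l i * i
      = (l:ℝ) - ((R:ℝ) - l) * Ssum R l := by
  rw [Finset.sum_range_succ']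
  have hR : (0:ℝ) < (R:ℝ) := by
    have : (0:ℕ) < R := by omega
    exact_mod_cast this
  have hRl : (0:ℝ) < (R:ℝ) - l := cast_sub_pos (by omega)
  have h1 : ∀ i ∈ Finset.range l, astar R l (i+1) * ((i+1:ℕ):ℝ)
      = ((fun k : ℕ => (R:ℝ) * ((R:ℝ) - l) / ((R:ℝ) - k)) (i+1)
        - (fun k : ℕ => (R:ℝ) * ((R:ℝ) - l) / ((R:ℝ) - k)) i)
        - ((R:ℝ) - l) * (1 / ((R:ℝ) - i)) := by
    intro i hi
    have hi' := Finset.mem_range.mp hi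
    have h1 : (0:ℝ) < (R:ℝ) - i := cast_sub_pos (by omega)
    have h2 : (0:ℝ) < (R:ℝ) - ((i:ℝ)+1) := by
      have : ((i:ℝ)+1) < (R:ℝ) := by
        have : (i+1:ℕ) < R := by omega
        exact_mod_cast this
      linarith
    rw [astar_succ_eq hlR hi']
    push_cast
    field_simp
    ring
  rw [Finset.sum_congr rfl h1, Finset.sum_sub_distrib,
    Finset.sum_range_sub (fun k : ℕ => (R:ℝ) * ((R:ℝ) - l) / ((R:ℝ) - k)),
    ← Finset.mul_sum]
  have h0 : astar R l 0 * ((0:ℕ):ℝ) = 0 := by simp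
  rw [h0, Ssum]
  field_simp
  rw [Nat.cast_zero, sub_zero, mul_sub, mul_one, mul_div_assoc', mul_div_cancel_left₀ _ hR.ne']
  ring

lemma payA_inner (hlR : l + 1 ≤ R) {i : ℕ} (hi : i ≤ l) :
    ∑ j ∈ Finset.range (R + 1), dstar R l j * piA R R i j = (R:ℝ) := by
  have hsplit : ∀ j, piA R R i j = ((R:ℝ) - i) + (if j < i then (R:ℝ) - j else 0) := by
    intro j; simp only [piA]; split <;> ring
  have : ∑ j ∈ Finset.range (R + 1), dstar R l j * piA R R i j
      = ((R:ℝ) - i) * ∑ j ∈ Finset.range (R+1), dstar R l j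
        + ∑ j ∈ Finset.range (R+1), dstar R l j * (if j < i then (R:ℝ) - j else 0) := by
    rw [Finset.mul_sum, ← Finset.sum_add_distrib]
    apply Finset.sum_congr rfl
    intro j _
    rw [hsplit j]; ring
  rw [this, dstar_sum hlR]
  have h2 : ∑ j ∈ Finset.range (R+1), dstar R l j * (if j < i then (R:ℝ) - j else 0)
      = (i:ℝ) := by
    have hsub : Finset.range i ⊆ Finset.range (R+1) := Finset.range_subset_range.mpr (by omega)
    rw [← Finset.sum_subset hsub (by
      intro x hx hx'
      simp only [Finset.mem_range] at hx hx'
      rw [if_neg (by omega), mul_zero])]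
    have h3 : ∀ j ∈ Finset.range i, dstar R l j * (if j < i then (R:ℝ) - j else 0) = 1 := by
      intro j hj
      have hj' := Finset.mem_range.mp hj
      have hjl : j < l := by omega
      have hRj : (0:ℝ) < (R:ℝ) - j := cast_sub_pos (by omega)
      simp only [dstar, if_pos hjl, if_pos hj']
      field_simp
    rw [Finset.sum_congr rfl h3]
    simp
  rw [h2]; ring

lemma payD_inner (hlR : l + 1 ≤ R) {i : ℕ} (hi : i ≤ l) :
    ∑ j ∈ Finset.range (R + 1), dstar R l j * piD R i j
      = ((l:ℝ) - i) + ((R:ℝ) - l) * (1 - Ssum R l) := by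
  have hsub : Finset.range (l+1) ⊆ Finset.range (R+1) := Finset.range_subset_range.mpr (by omega)
  rw [← Finset.sum_subset hsub (by
    intro x hx hx'
    simp only [Finset.mem_range] at hx hx'
    have : l < x := by omega
    simp only [dstar]
    rw [if_neg (by omega), if_neg (by omega), zero_mul])]
  rw [Finset.sum_range_succ]
  have hlast : dstar R l l * piD R i l = ((R:ℝ) - l) * (1 - Ssum R l) := by
    have : dstar R l l = 1 - Ssum R l := by simp [dstar, Ssum]
    rw [this]
    simp only [piD]
    rw [if_neg (by omega)]
    ring
  rw [hlast]
  have hmain : ∀ j ∈ Finset.range l, dstar R l j * piD R i j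
      = (if j < i then (0:ℝ) else 1) := by
    intro j hj
    have hj' := Finset.mem_range.mp hj
    have hRj : (0:ℝ) < (R:ℝ) - j := cast_sub_pos (by omega)
    simp only [dstar, piD, if_pos hj']
    split
    · rw [mul_zero]
    · field_simp
  rw [Finset.sum_congr rfl hmain]
  have hcount : ∑ j ∈ Finset.range l, (if j < i then (0:ℝ) else 1) = (l:ℝ) - i := by
    have : ∀ j ∈ Finset.range l, (if j < i then (0:ℝ) else 1)
        = 1 - (if j < i then (1:ℝ) else 0) := by
      intro j _; split <;> ring
    rw [Finset.sum_congr rfl this, Finset.sum_sub_distrib]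
    have h4 : ∑ j ∈ Finset.range l, (if j < i then (1:ℝ) else 0) = (i:ℝ) := by
      have hsub2 : Finset.range i ⊆ Finset.range l := Finset.range_subset_range.mpr hi
      rw [← Finset.sum_subset hsub2 (by
        intro x hx hx'
        simp only [Finset.mem_range] at hx hx'
        rw [if_neg (by omega)])]
      have : ∀ j ∈ Finset.range i, (if j < i then (1:ℝ) else 0) = 1 := by
        intro j hj; rw [if_pos (Finset.mem_range.mp hj)]
      rw [Finset.sum_congr rfl this]
      simp
    rw [h4]
    simp
  rw [hcount]

lemma outer_restrict (g : ℕ → ℝ) (hlR : l + 1 ≤ R) :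
    ∑ i ∈ Finset.range (R + 1), astar R l i * g i
      = ∑ i ∈ Finset.range (l + 1), astar R l i * g i := by
  symm
  apply Finset.sum_subset (Finset.range_subset_range.mpr (by omega))
  intro x hx hx'
  simp only [Finset.mem_range] at hx hx'
  simp only [astar]
  rw [if_neg (by omega), if_neg (by omega), zero_mul]

lemma payA_eq (hlR : l + 1 ≤ R) :
    PayA R R (astar R l) (dstar R l) = (R:ℝ) := by
  unfold PayA
  have h1 : ∀ i ∈ Finset.range (R+1),
      ∑ j ∈ Finset.range (R + 1), astar R l i * dstar R l j * piA R R i j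
        = astar R l i * ∑ j ∈ Finset.range (R + 1), dstar R l j * piA R R i j := by
    intro i _
    rw [Finset.mul_sum]
    apply Finset.sum_congr rfl
    intro j _; ring
  rw [Finset.sum_congr rfl h1,
    outer_restrict (fun i => ∑ j ∈ Finset.range (R + 1), dstar R l j * piA R R i j) hlR]
  have h2 : ∀ i ∈ Finset.range (l+1),
      astar R l i * ∑ j ∈ Finset.range (R + 1), dstar R l j * piA R R i j
        = astar R l i * (R:ℝ) := by
    intro i hi
    have hi' := Finset.mem_range.mp hi
    rw [payA_inner hlR (by omega)]
  rw [Finset.sum_congr rfl h2, ← Finset.sum_mul, astar_sum hlR, one_mul]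

lemma payD_eq (hlR : l + 1 ≤ R) :
    PayD R R (astar R l) (dstar R l) = (R:ℝ) - l := by
  unfold PayD
  have h1 : ∀ i ∈ Finset.range (R+1),
      ∑ j ∈ Finset.range (R + 1), astar R l i * dstar R l j * piD R i j
        = astar R l i * ∑ j ∈ Finset.range (R + 1), dstar R l j * piD R i j := by
    intro i _
    rw [Finset.mul_sum]
    apply Finset.sum_congr rfl
    intro j _; ring
  rw [Finset.sum_congr rfl h1,
    outer_restrict (fun i => ∑ j ∈ Finset.range (R + 1), dstar R l j * piD R i j) hlR]
  have h2 : ∀ i ∈ Finset.range (l+1),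
      astar R l i * ∑ j ∈ Finset.range (R + 1), dstar R l j * piD R i j
        = astar R l i * ((l:ℝ) + ((R:ℝ) - l) * (1 - Ssum R l)) - astar R l i * i := by
    intro i hi
    have hi' := Finset.mem_range.mp hi
    rw [payD_inner hlR (by omega)]
    ring
  rw [Finset.sum_congr rfl h2, Finset.sum_sub_distrib, ← Finset.sum_mul,
    astar_sum hlR, astar_moment hlR, one_mul]
  ring

end Pay

section Asymp

open Real Filter

lemma H_eq (n : ℕ) : H n = ∑ i ∈ Finset.range n, 1 / ((i:ℝ)+1) := by
  induction n with
  | zero => simp [H]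
  | succ n ih =>
    rw [H, Finset.sum_Icc_succ_top (by omega), Finset.sum_range_succ, ← H, ih]
    push_cast
    ring

lemma telescope (f : ℕ → ℝ) {m n : ℕ} (h : m ≤ n) :
    ∑ k ∈ Finset.Ico m n, (f (k+1) - f k) = f n - f m := by
  rw [Finset.sum_Ico_eq_sub _ h, Finset.sum_range_sub, Finset.sum_range_sub]
  ring

lemma H_diff {m n : ℕ} (h : m ≤ n) :
    H n - H m = ∑ k ∈ Finset.Ico m n, 1 / ((k:ℝ)+1) := by
  rw [H_eq, H_eq, eq_comm, Finset.sum_Ico_eq_sub _ h]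

lemma harm_lower {m n : ℕ} (h : m ≤ n) :
    Real.log ((n:ℝ)+1) - Real.log ((m:ℝ)+1) ≤ H n - H m := by
  rw [H_diff h]
  set f : ℕ → ℝ := fun k : ℕ => Real.log ((k:ℝ)+1) with hf
  have key : ∀ k ∈ Finset.Ico m n, f (k+1) - f k ≤ 1 / ((k:ℝ)+1) := by
    intro k _
    have hk1 : (0:ℝ) < (k:ℝ)+1 := by positivity
    have hx : (0:ℝ) < ((k:ℝ)+2)/((k:ℝ)+1) := by positivity
    have h2 := Real.log_le_sub_one_of_pos hx
    rw [Real.log_div (by positivity) (by positivity)] at h2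
    have heq : ((k:ℝ)+2)/((k:ℝ)+1) - 1 = 1/((k:ℝ)+1) := by field_simp; norm_num
    rw [heq] at h2
    have hc : f (k+1) = Real.log ((k:ℝ)+2) := by
      simp only [hf]; push_cast; ring_nf
    rw [hc]
    simpa [hf] using h2
  have tel := telescope f h
  have hsum := Finset.sum_le_sum key
  rw [tel] at hsum
  simpa [hf] using hsum

lemma harm_upper {m n : ℕ} (hm : 1 ≤ m) (h : m ≤ n) :
    H n - H m ≤ Real.log (n:ℝ) - Real.log (m:ℝ) := by
  rw [H_diff h]
  set f : ℕ → ℝ := fun k : ℕ => Real.log (k:ℝ) with hf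
  have key : ∀ k ∈ Finset.Ico m n, 1 / ((k:ℝ)+1) ≤ f (k+1) - f k := by
    intro k hk
    have hk1 : 1 ≤ k := le_trans hm (Finset.mem_Ico.mp hk).1
    have hk0 : (0:ℝ) < (k:ℝ) := by exact_mod_cast hk1
    have hx : (0:ℝ) < (k:ℝ)/((k:ℝ)+1) := by positivity
    have h2 := Real.log_le_sub_one_of_pos hx
    rw [Real.log_div (by positivity) (by positivity)] at h2
    have heq : (k:ℝ)/((k:ℝ)+1) - 1 = -(1/((k:ℝ)+1)) := by field_simp; ring
    rw [heq] at h2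
    have hc : f (k+1) = Real.log ((k:ℝ)+1) := by
      simp only [hf]; push_cast; ring_nf
    rw [hc]
    simp only [hf]
    linarith
  have tel := telescope f h
  have hsum := Finset.sum_le_sum key
  rw [tel] at hsum
  simpa [hf] using hsum

end Asymp

section Limits

open Real Filter

lemma L_upper {R l : ℕ} (hR : 2 ≤ R) (h : IsUpperBound R l) :
    (l:ℝ)/R ≤ (1 + 1/(R:ℝ)) * (1 - (Real.exp 1)⁻¹) := by
  obtain ⟨hl1, hl2, hlt, _⟩ := h
  have hlR : l + 1 ≤ R := by omega
  have hR0 : (0:ℝ) < (R:ℝ) := by exact_mod_cast (by omega : 0 < R)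
  have he : (0:ℝ) < Real.exp 1 := Real.exp_pos 1
  have hm : R - l ≤ R := Nat.sub_le R l
  have hlow := harm_lower hm
  have hlog : Real.log ((R:ℝ)+1) - Real.log (((R - l : ℕ):ℝ)+1) < 1 := lt_of_le_of_lt hlow hlt
  have hcast : ((R - l : ℕ):ℝ) = (R:ℝ) - l := by
    have : l ≤ R := by omega
    push_cast [this]; ring
  rw [hcast] at hlog
  -- (R+1)/(R-l+1) < e
  have hd : (0:ℝ) < (R:ℝ) - l + 1 := by
    have : (l:ℝ) ≤ R := by exact_mod_cast (by omega : l ≤ R)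
    linarith
  have hx : (0:ℝ) < ((R:ℝ)+1)/((R:ℝ)-l+1) := by positivity
  have hlt2 : ((R:ℝ)+1)/((R:ℝ)-l+1) < Real.exp 1 := by
    have := Real.exp_lt_exp.mpr (by
      rwa [Real.log_div (by positivity) (by positivity)] : Real.log (((R:ℝ)+1)/((R:ℝ)-l+1)) < 1)
    rwa [Real.exp_log hx] at this
  have hkey : (R:ℝ) + 1 < Real.exp 1 * ((R:ℝ) - l + 1) := by
    rwa [div_lt_iff₀ hd] at hlt2
  have hei : (0:ℝ) < (Real.exp 1)⁻¹ := by positivity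
  have h5 : (Real.exp 1)⁻¹ * ((R:ℝ)+1) < (R:ℝ) - l + 1 := by
    have h6 := mul_lt_mul_of_pos_left hkey hei
    rwa [← mul_assoc, inv_mul_cancel₀ he.ne', one_mul] at h6
  rw [div_le_iff₀ hR0]
  have hRR : (1 + 1/(R:ℝ)) * (1 - (Real.exp 1)⁻¹) * R = ((R:ℝ)+1) * (1 - (Real.exp 1)⁻¹) := by
    field_simp
  rw [hRR]
  nlinarith [h5]

lemma L_lower {R l : ℕ} (hR : 2 ≤ R) (h : IsUpperBound R l) :
    1 - 1/(R:ℝ) - (Real.exp 1)⁻¹ ≤ (l:ℝ)/R := by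
  obtain ⟨hl1, hl2, _, hgt⟩ := h
  have hlR : l + 1 ≤ R := by omega
  have hR0 : (0:ℝ) < (R:ℝ) := by exact_mod_cast (by omega : 0 < R)
  have he : (0:ℝ) < Real.exp 1 := Real.exp_pos 1
  have hei : (0:ℝ) < (Real.exp 1)⁻¹ := by positivity
  by_cases hcase : l = R - 1
  · subst hcase
    have hc : (((R-1:ℕ)):ℝ) = (R:ℝ) - 1 := by
      push_cast [ (by omega : 1 ≤ R) ]; ring
    rw [hc, le_div_iff₀ hR0]
    have h7 : (1/(R:ℝ)) * R = 1 := by field_simp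
    nlinarith [mul_pos hei hR0, h7]
  · have hm1 : 1 ≤ R - l - 1 := by omega
    have hm2 : R - l - 1 ≤ R := by omega
    have hup := harm_upper hm1 hm2
    have hlog : 1 < Real.log (R:ℝ) - Real.log ((R - l - 1 : ℕ):ℝ) := lt_of_lt_of_le hgt hup
    have hcast : ((R - l - 1 : ℕ):ℝ) = (R:ℝ) - l - 1 := by
      have h1 : l + 1 ≤ R := by omega
      push_cast [Nat.sub_sub, h1]
      ring
    have hm0 : (0:ℝ) < ((R - l - 1 : ℕ):ℝ) := by exact_mod_cast (by omega : 0 < R - l - 1)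
    have hx : (0:ℝ) < (R:ℝ)/((R - l - 1 : ℕ):ℝ) := by positivity
    have hlt2 : Real.exp 1 < (R:ℝ)/((R - l - 1 : ℕ):ℝ) := by
      have := Real.exp_lt_exp.mpr (by
        rwa [Real.log_div (by positivity) hm0.ne'] : 1 < Real.log ((R:ℝ)/((R - l - 1 : ℕ):ℝ)))
      rwa [Real.exp_log hx] at this
    have hkey : Real.exp 1 * ((R:ℝ) - l - 1) < (R:ℝ) := by
      rw [hcast] at hlt2 hm0
      rwa [lt_div_iff₀ hm0] at hlt2
    have h5 : (R:ℝ) - l - 1 < (Real.exp 1)⁻¹ * R := by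
      have h6 := mul_lt_mul_of_pos_left hkey hei
      rwa [← mul_assoc, inv_mul_cancel₀ he.ne', one_mul] at h6
    rw [le_div_iff₀ hR0]
    have h7 : (1/(R:ℝ)) * R = 1 := by field_simp
    nlinarith [h5, h7]

end Limits


open Filter

/-- Attacker's share of expected equilibrium earnings converges to `e/(e+1)`:
both as the ratio of expected payoffs and in the closed form `R/(2R - l*)`. -/
theorem attacker_share_tendsto (L : ℕ → ℕ) (hL : ∀ R, 2 ≤ R → IsUpperBound R (L R)) :
    Filter.Tendsto (fun R : ℕ =>
        PayA R R (astar R (L R)) (dstar R (L R)) /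
          (PayA R R (astar R (L R)) (dstar R (L R)) +
            PayD R R (astar R (L R)) (dstar R (L R)))) Filter.atTop
      (nhds (Real.exp 1 / (Real.exp 1 + 1))) ∧
    Filter.Tendsto (fun R : ℕ => (R : ℝ) / (2 * (R : ℝ) - L R)) Filter.atTop
      (nhds (Real.exp 1 / (Real.exp 1 + 1))) := by
  have he : (0:ℝ) < Real.exp 1 := Real.exp_pos 1
  have hei : (0:ℝ) < (Real.exp 1)⁻¹ := by positivity
  have hLR : Tendsto (fun R : ℕ => (L R : ℝ)/R) atTop (nhds (1 - (Real.exp 1)⁻¹)) := by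
    apply tendsto_of_tendsto_of_tendsto_of_le_of_le'
      (g := fun R : ℕ => 1 - 1/(R:ℝ) - (Real.exp 1)⁻¹)
      (h := fun R : ℕ => (1 + 1/(R:ℝ)) * (1 - (Real.exp 1)⁻¹))
    · have h1 := tendsto_one_div_atTop_nhds_zero_nat (𝕜 := ℝ)
      have h2 := ((tendsto_const_nhds (α := ℕ) (x := (1:ℝ))).sub h1).sub
        (tendsto_const_nhds (x := (Real.exp 1)⁻¹))
      simpa using h2
    · have h1 := tendsto_one_div_atTop_nhds_zero_nat (𝕜 := ℝ)
      have h2 := ((tendsto_const_nhds (α := ℕ) (x := (1:ℝ))).add h1).mul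
        (tendsto_const_nhds (x := 1 - (Real.exp 1)⁻¹))
      simpa using h2
    · filter_upwards [eventually_ge_atTop 2] with R hR
      exact L_lower hR (hL R hR)
    · filter_upwards [eventually_ge_atTop 2] with R hR
      exact L_upper hR (hL R hR)
  have h2 : Tendsto (fun R : ℕ => 2 - (L R : ℝ)/R) atTop (nhds (1 + (Real.exp 1)⁻¹)) := by
    have h3 := (tendsto_const_nhds (α := ℕ) (x := (2:ℝ))).sub hLR
    have hv : (2:ℝ) - (1 - (Real.exp 1)⁻¹) = 1 + (Real.exp 1)⁻¹ := by ring
    rwa [hv] at h3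
  have h3 : Tendsto (fun R : ℕ => (2 - (L R : ℝ)/R)⁻¹) atTop
      (nhds ((1 + (Real.exp 1)⁻¹)⁻¹)) := h2.inv₀ (by positivity)
  have hval : ((1:ℝ) + (Real.exp 1)⁻¹)⁻¹ = Real.exp 1 / (Real.exp 1 + 1) := by
    rw [eq_div_iff (by positivity), inv_mul_eq_div, div_eq_iff (by positivity)]
    field_simp
  rw [hval] at h3
  have hsecond : Tendsto (fun R : ℕ => (R:ℝ)/(2*(R:ℝ) - L R)) atTop
      (nhds (Real.exp 1/(Real.exp 1+1))) := by
    apply Filter.Tendsto.congr' _ h3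
    filter_upwards [eventually_ge_atTop 1] with R hR
    have hR0 : (0:ℝ) < (R:ℝ) := by exact_mod_cast (by omega : 0 < R)
    have hx : 2 - (L R:ℝ)/R = (2*(R:ℝ) - L R)/R := by
      field_simp
    rw [hx, inv_div]
  refine ⟨?_, hsecond⟩
  apply Filter.Tendsto.congr' _ hsecond
  filter_upwards [eventually_ge_atTop 2] with R hR
  have hub := hL R hR
  have hlR : L R + 1 ≤ R := by
    obtain ⟨a, b, _, _⟩ := hub
    omega
  rw [payA_eq hlR, payD_eq hlR]
  congr 1
  ring
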